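/- The polynomials S_n(x,q) defined by S_0(x,q)=1 and S_{n+1}(x,q) = (q+nx)·S_n(x,q) + x(1-2x)·∂_x S_n(x,q) satisfy: for every real q > 0 and n ≥ 2, S_n(x,q) as a polynomial in x has only real, nonpositive, simple zeros. -/
import Mathlib


open Polynomial in
/-- The polynomials `S_n(x,q)` (for a fixed value of `q`), defined by `S_0(x,q) = 1` and
`S_{n+1}(x,q) = (q + n x)·S_n(x,q) + x(1-2x)·∂_x S_n(x,q)`. -/
noncomputable def Sq (q : ℝ) : ℕ → Polynomial ℝ
  | 0 => 1
  | n + 1 =>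
      (Polynomial.C q + Polynomial.C (n : ℝ) * X) * Sq q n +
        X * (1 - 2 * X) * (Sq q n).derivative


open Polynomial Finset

/-- IVT: a sign change gives a root in the open interval. -/
lemma zero_of_sign_change {p : Polynomial ℝ} {a b : ℝ} (hab : a < b)
    (h : p.eval a * p.eval b < 0) : ∃ x ∈ Set.Ioo a b, p.eval x = 0 := by
  have hc : ContinuousOn (fun x => p.eval x) (Set.Icc a b) := (p.continuous_aeval).continuousOn
  rcases lt_or_ge (p.eval a) 0 with ha | ha
  · have hb : 0 < p.eval b := by nlinarith
    have := intermediate_value_Ioo hab.le hc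
    have h0 : (0:ℝ) ∈ Set.Ioo (p.eval a) (p.eval b) := ⟨ha, hb⟩
    obtain ⟨x, hx, hx0⟩ := this h0
    exact ⟨x, hx, hx0⟩
  · have ha' : 0 < p.eval a := by
      rcases ha.lt_or_eq with h' | h'
      · exact h'
      · exfalso; rw [← h'] at h; simp at h
    have hb : p.eval b < 0 := by nlinarith
    have := intermediate_value_Ioo' hab.le hc
    obtain ⟨x, hx, hx0⟩ := this ⟨hb, ha'⟩
    exact ⟨x, hx, hx0⟩

/-- From `D` roots located in increasing disjoint intervals with right-most endpoint `0`,
a degree bound, and positivity at `0`, obtain the full negative-simple-roots factorization. -/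
lemma assemble (T : Polynomial ℝ) (D : ℕ) (R : ℕ → ℝ)
    (hmono : ∀ a b : ℕ, a < b → b ≤ D → R a < R b) (hRD : R D = 0)
    (hroot : ∀ k, k < D → ∃ x ∈ Set.Ioo (R k) (R (k+1)), T.eval x = 0)
    (hdeg : T.natDegree ≤ D) (h0 : 0 < T.eval 0) :
    ∃ (l : ℝ) (s : Fin D → ℝ), 0 < l ∧ StrictMono s ∧ (∀ i, s i < 0) ∧
      T = C l * ∏ i, (X - C (s i)) := by
  choose f hf1 hf2 using hroot
  set s : Fin D → ℝ := fun i => f i i.isLt with hs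
  have hsmem : ∀ i : Fin D, s i ∈ Set.Ioo (R i) (R (i+1)) := fun i => hf1 i i.isLt
  have hsmono : StrictMono s := by
    intro i j hij
    have h1 : s i < R (i+1) := (hsmem i).2
    have h2 : R j < s j := (hsmem j).1
    have h3 : R ((i:ℕ)+1) ≤ R j := by
      have hle : (i:ℕ)+1 ≤ (j:ℕ) := hij
      rcases hle.lt_or_eq with h | h
      · exact (hmono _ _ h (le_of_lt j.isLt)).le
      · rw [h]
    linarith
  have hsneg : ∀ i, s i < 0 := by
    intro i
    have h1 : s i < R (i+1) := (hsmem i).2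
    have h3 : R ((i:ℕ)+1) ≤ R D := by
      have hle : (i:ℕ)+1 ≤ D := i.isLt
      rcases hle.lt_or_eq with h | h
      · exact (hmono _ _ h le_rfl).le
      · rw [h]
    rw [hRD] at h3; linarith
  have hsroot : ∀ i : Fin D, T.eval (s i) = 0 := fun i => hf2 i i.isLt
  -- T ≠ 0
  have hT0 : T ≠ 0 := by intro h; rw [h] at h0; simp at h0
  -- the multiset of found roots
  set m : Multiset ℝ := Finset.univ.val.map s with hm
  have hmcard : Multiset.card m = D := by simp [hm]
  have hnodup : m.Nodup := Multiset.Nodup.map hsmono.injective Finset.univ.nodup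
  have hle : m ≤ T.roots := by
    rw [Multiset.le_iff_count]
    intro a
    by_cases ha : a ∈ m
    · have h1 : m.count a = 1 := Multiset.count_eq_one_of_mem hnodup ha
      obtain ⟨i, _, hi⟩ := Multiset.mem_map.mp ha
      have : 0 < T.roots.count a := by
        rw [Polynomial.count_roots]
        exact (Polynomial.rootMultiplicity_pos hT0).mpr (by rw [← hi]; exact hsroot i)
      omega
    · rw [Multiset.count_eq_zero_of_notMem ha]; omega
  have hcard : Multiset.card T.roots = T.natDegree := by
    have h1 := Polynomial.card_roots' T
    have h2 : D ≤ Multiset.card T.roots := by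
      rw [← hmcard]; exact Multiset.card_le_card hle
    omega
  have hroots : T.roots = m := by
    symm
    apply Multiset.eq_of_le_of_card_le hle
    rw [hmcard, hcard]; exact hdeg
  have hfact := Polynomial.C_leadingCoeff_mul_prod_multiset_X_sub_C hcard
  rw [hroots] at hfact
  have hprod : ∏ i, (X - C (s i)) = (Multiset.map (fun a => X - C a) m).prod := by
    rw [hm, Multiset.map_map, Finset.prod_eq_multiset_prod]
    rfl
  have hfact2 : T = C T.leadingCoeff * ∏ i, (X - C (s i)) := by
    rw [hprod, hfact]
  have hlpos : 0 < T.leadingCoeff := by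
    have he : T.eval 0 = T.leadingCoeff * ∏ i, (0 - s i) := by
      conv_lhs => rw [hfact2]
      simp [Polynomial.eval_prod]
    have hp : 0 < ∏ i, (0 - s i) := Finset.prod_pos fun i _ => by linarith [hsneg i]
    rw [he] at h0
    by_contra hcon
    push_neg at hcon
    nlinarith
  exact ⟨T.leadingCoeff, s, hlpos, hsmono, hsneg, hfact2⟩

lemma deriv_eval_factored {d : ℕ} (l : ℝ) (r : Fin d → ℝ) (i : Fin d) :
    (C l * ∏ j, (X - C (r j))).derivative.eval (r i)
      = l * ∏ j ∈ univ.erase i, (r i - r j) := by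
  have hsplit : C l * ∏ j, (X - C (r j))
      = (X - C (r i)) * (C l * ∏ j ∈ univ.erase i, (X - C (r j))) := by
    rw [← Finset.mul_prod_erase _ _ (mem_univ i)]; ring
  rw [hsplit, derivative_mul, derivative_X_sub_C]
  simp [Polynomial.eval_prod]

lemma w_pair {d : ℕ} {r : Fin d → ℝ} (hr : StrictMono r) (a b : Fin d) (hab : a < b)
    (hcons : ∀ j : Fin d, j ≠ a → j ≠ b → j < a ∨ b < j) :
    (∏ j ∈ univ.erase a, (r a - r j)) * (∏ j ∈ univ.erase b, (r b - r j)) < 0 := by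
  set s : Finset (Fin d) := (univ.erase a).erase b with hs
  have hbmem : b ∈ univ.erase a := mem_erase.mpr ⟨hab.ne', mem_univ b⟩
  have hamem : a ∈ univ.erase b := mem_erase.mpr ⟨hab.ne, mem_univ a⟩
  have h1 : univ.erase a = insert b s := (Finset.insert_erase hbmem).symm
  have hcomm : (univ.erase b).erase a = s := by rw [hs, Finset.erase_right_comm]
  have h2 : univ.erase b = insert a s := by rw [← hcomm, Finset.insert_erase hamem]
  have hbs : b ∉ s := Finset.notMem_erase b _
  have has : a ∉ s := by rw [← hcomm]; exact Finset.notMem_erase a _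
  rw [h1, h2, Finset.prod_insert hbs, Finset.prod_insert has]
  have key : (r a - r b) * (∏ j ∈ s, (r a - r j)) * ((r b - r a) * ∏ j ∈ s, (r b - r j))
      = ((r a - r b) * (r b - r a)) * ∏ j ∈ s, ((r a - r j) * (r b - r j)) := by
    rw [Finset.prod_mul_distrib]; ring
  rw [key]
  apply mul_neg_of_neg_of_pos
  · have := hr hab; nlinarith
  · apply Finset.prod_pos
    intro j hj
    rw [hs, Finset.mem_erase, Finset.mem_erase] at hj
    obtain ⟨hjb, hja, -⟩ := hj
    rcases hcons j hja hjb with h | h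
    · have h1 := hr h
      have h2 := hr (h.trans hab)
      nlinarith
    · have h1 := hr h
      have h2 := hr (hab.trans h)
      nlinarith
lemma Sq_succ (q : ℝ) (n : ℕ) :
    Sq q (n+1) = C q * Sq q n + C (n:ℝ) * (X * Sq q n) + X * (Sq q n).derivative
      - C 2 * (X * (X * (Sq q n).derivative)) := by
  show (C q + C (n:ℝ) * X) * Sq q n + X * (1 - 2 * X) * (Sq q n).derivative = _
  rw [map_ofNat C 2]
  ring

lemma T_natDegree_le (q c : ℝ) (e : ℕ) (S : Polynomial ℝ) (hdeg : S.natDegree = e+1) :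
    (C q * S + C c * (X * S) + X * S.derivative
      - C 2 * (X * (X * S.derivative))).natDegree ≤ e+2 := by
  have hd : S.derivative.natDegree ≤ e := by
    have := S.natDegree_derivative_le
    omega
  have h1 : (C q * S).natDegree ≤ e+2 :=
    le_trans (natDegree_mul_le) (by simp [hdeg])
  have h2 : (C c * (X * S)).natDegree ≤ e+2 :=
    le_trans (natDegree_mul_le) (by
      simp only [natDegree_C, zero_add]
      exact le_trans (natDegree_mul_le) (by simp [hdeg]; omega))
  have h3 : (X * S.derivative).natDegree ≤ e+2 :=
    le_trans (natDegree_mul_le) (by simp; omega)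
  have h4 : (C 2 * (X * (X * S.derivative))).natDegree ≤ e+2 := by
    refine le_trans (natDegree_mul_le) ?_
    simp only [natDegree_C, zero_add]
    refine le_trans (natDegree_mul_le) ?_
    have : (X * S.derivative).natDegree ≤ e+1 :=
      le_trans (natDegree_mul_le) (by simp; omega)
    simp only [natDegree_X]
    omega
  refine le_trans (natDegree_sub_le _ _) (max_le ?_ h4)
  refine le_trans (natDegree_add_le _ _) (max_le ?_ h3)
  exact le_trans (natDegree_add_le _ _) (max_le h1 h2)

lemma T_coeff_top (q c : ℝ) (e : ℕ) (S : Polynomial ℝ) (hdeg : S.natDegree = e+1) :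
    (C q * S + C c * (X * S) + X * S.derivative
      - C 2 * (X * (X * S.derivative))).coeff (e+2)
      = (c - 2*(e+1)) * S.coeff (e+1) := by
  have hS2 : S.coeff (e+2) = 0 := coeff_eq_zero_of_natDegree_lt (by omega)
  have hd1 : S.derivative.coeff (e+1) = 0 := by
    rw [coeff_derivative, coeff_eq_zero_of_natDegree_lt (by omega : S.natDegree < e+1+1)]
    try ring
  have hde : S.derivative.coeff e = S.coeff (e+1) * ((e:ℝ)+1) := by
    rw [coeff_derivative]
  simp only [coeff_sub, coeff_add, coeff_C_mul, coeff_X_mul, hS2, hd1, hde]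
  push_cast
  ring

lemma factored_natDegree {d : ℕ} {l : ℝ} (hl : l ≠ 0) (r : Fin d → ℝ) :
    (C l * ∏ i, (X - C (r i))).natDegree = d := by
  rw [natDegree_C_mul hl, natDegree_prod _ _ (fun i _ => X_sub_C_ne_zero (r i))]
  simp

lemma factored_coeff {d : ℕ} {l : ℝ} (hl : l ≠ 0) (r : Fin d → ℝ) :
    (C l * ∏ i, (X - C (r i))).coeff d = l := by
  have h1 := factored_natDegree hl r
  have h2 : (C l * ∏ i, (X - C (r i))).leadingCoeff = l := by
    rw [leadingCoeff_mul, leadingCoeff_C,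
      Monic.leadingCoeff (monic_prod_of_monic _ _ fun i _ => monic_X_sub_C (r i)), mul_one]
  have h3 : (C l * ∏ i, (X - C (r i))).coeff ((C l * ∏ i, (X - C (r i))).natDegree)
      = (C l * ∏ i, (X - C (r i))).leadingCoeff := coeff_natDegree
  rw [h1, h2] at h3
  exact h3
lemma step (q : ℝ) (hq : 0 < q) (n : ℕ) (hn : 2 ≤ n)
    (h : ∃ (l : ℝ) (r : Fin (n/2) → ℝ), 0 < l ∧ StrictMono r ∧ (∀ i, r i < 0) ∧
      Sq q n = C l * ∏ i, (X - C (r i))) :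
    ∃ (l : ℝ) (r : Fin ((n+1)/2) → ℝ), 0 < l ∧ StrictMono r ∧ (∀ i, r i < 0) ∧
      Sq q (n+1) = C l * ∏ i, (X - C (r i)) := by
  obtain ⟨e, hd⟩ : ∃ e, n/2 = e + 1 := ⟨n/2 - 1, by omega⟩
  rw [hd] at h
  obtain ⟨l, r, hl, hrmono, hrneg, hS⟩ := h
  have hl0 : l ≠ 0 := ne_of_gt hl
  -- basic structural facts about S := Sq q n
  have hSdeg : (Sq q n).natDegree = e + 1 := by rw [hS]; exact factored_natDegree hl0 r
  have hScoeff : (Sq q n).coeff (e+1) = l := by rw [hS]; exact factored_coeff hl0 r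
  have hSroot : ∀ i, (Sq q n).eval (r i) = 0 := by
    intro i
    rw [hS, eval_mul, eval_prod]
    rw [Finset.prod_eq_zero (mem_univ i) (by simp)]
    ring
  -- values of T := Sq q (n+1) at the roots of S
  set w : Fin (e+1) → ℝ := fun i => ∏ j ∈ univ.erase i, (r i - r j) with hw
  have hv : ∀ i, (Sq q (n+1)).eval (r i) = (r i * (1 - 2 * r i)) * (l * w i) := by
    intro i
    have h2 : (Sq q n).derivative.eval (r i) = l * w i := by
      rw [hS]; exact deriv_eval_factored l r i
    rw [Sq_succ]
    simp only [eval_sub, eval_add, eval_mul, eval_C, eval_X, hSroot i, h2]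
    ring
  have hc : ∀ i, r i * (1 - 2 * r i) < 0 := fun i =>
    mul_neg_of_neg_of_pos (hrneg i) (by have := hrneg i; linarith)
  -- sign alternation at consecutive roots
  have hvpair : ∀ k (hk : k + 1 < e + 1),
      (Sq q (n+1)).eval (r ⟨k, by omega⟩) * (Sq q (n+1)).eval (r ⟨k+1, hk⟩) < 0 := by
    intro k hk
    set a : Fin (e+1) := ⟨k, by omega⟩
    set b : Fin (e+1) := ⟨k+1, hk⟩
    have hab : a < b := by simp [a, b, Fin.lt_def]
    have hwab : w a * w b < 0 := by
      apply w_pair hrmono a b hab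
      intro j hja hjb
      have h1 : (j:ℕ) ≠ k := fun hh => hja (Fin.ext hh)
      have h2 : (j:ℕ) ≠ k+1 := fun hh => hjb (Fin.ext hh)
      rcases Nat.lt_or_ge (j:ℕ) k with hcase | hcase
      · exact Or.inl (by simpa [a, Fin.lt_def] using hcase)
      · exact Or.inr (by simp only [b, Fin.lt_def]; omega)
    rw [hv a, hv b]
    have key : (r a * (1 - 2 * r a)) * (l * w a) * ((r b * (1 - 2 * r b)) * (l * w b))
        = ((r a * (1 - 2 * r a)) * (r b * (1 - 2 * r b))) * ((l * l) * (w a * w b)) := by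
      ring
    rw [key]
    exact mul_neg_of_pos_of_neg (mul_pos_of_neg_of_neg (hc a) (hc b))
      (mul_neg_of_pos_of_neg (mul_pos hl hl) hwab)
  -- value at the largest root is negative
  have hlast : (Sq q (n+1)).eval (r ⟨e, by omega⟩) < 0 := by
    set a : Fin (e+1) := ⟨e, by omega⟩
    have hwpos : 0 < w a := by
      apply Finset.prod_pos
      intro j hj
      have hja : j ≠ a := (Finset.mem_erase.mp hj).1
      have : j < a := by
        have h1 := j.isLt
        have h2 : (j:ℕ) ≠ e := fun hh => hja (Fin.ext hh)
        rw [Fin.lt_def]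
        show (j:ℕ) < e
        omega
      have := hrmono this
      linarith
    rw [hv a]
    exact mul_neg_of_neg_of_pos (hc a) (mul_pos hl hwpos)
  -- value at 0 is positive
  have hS0 : 0 < (Sq q n).eval 0 := by
    rw [hS, eval_mul, eval_prod, eval_C]
    apply mul_pos hl
    apply Finset.prod_pos
    intro i _
    simp only [eval_sub, eval_X, eval_C]
    have := hrneg i
    linarith
  have hT0 : 0 < (Sq q (n+1)).eval 0 := by
    rw [Sq_succ]
    simp only [eval_sub, eval_add, eval_mul, eval_C, eval_X, zero_mul, mul_zero, add_zero,
      sub_zero]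
    exact mul_pos hq hS0
  -- degree bound
  have hdT : (Sq q (n+1)).natDegree ≤ e + 2 := by
    rw [Sq_succ]; exact T_natDegree_le q _ e _ hSdeg
  have hcoeffT : (Sq q (n+1)).coeff (e+2) = ((n:ℝ) - 2*(e+1)) * l := by
    rw [Sq_succ, T_coeff_top q _ e _ hSdeg, hScoeff]
  -- the common "inner" root-interval function
  set R : ℕ → ℝ := fun k => if h : k < e+1 then r ⟨k, h⟩ else 0 with hR
  have hRlt : ∀ k (h : k < e+1), R k = r ⟨k, h⟩ := fun k h => dif_pos h
  have hRtop : R (e+1) = 0 := dif_neg (by omega)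
  have hRmono : ∀ a b : ℕ, a < b → b ≤ e+1 → R a < R b := by
    intro a b hab hb
    have ha' : a < e+1 := by omega
    rw [hRlt a ha']
    by_cases hbe : b < e+1
    · rw [hRlt b hbe]
      exact hrmono (Fin.mk_lt_mk.mpr hab)
    · have hbeq : b = e+1 := by omega
      rw [hbeq, hRtop]
      exact hrneg _
  have hRroot : ∀ k, k < e+1 → ∃ x ∈ Set.Ioo (R k) (R (k+1)), (Sq q (n+1)).eval x = 0 := by
    intro k hk
    rw [hRlt k hk]
    by_cases hk1 : k+1 < e+1
    · rw [hRlt (k+1) hk1]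
      exact zero_of_sign_change (hrmono (Fin.mk_lt_mk.mpr (by omega))) (hvpair k hk1)
    · have hkeq : k + 1 = e + 1 := by omega
      have hfin : (⟨k, hk⟩ : Fin (e+1)) = ⟨e, by omega⟩ := by apply Fin.ext; show k = e; omega
      rw [hkeq, hRtop, hfin]
      exact zero_of_sign_change (hrneg _) (mul_neg_of_neg_of_pos hlast hT0)
  -- parity split
  rcases Nat.even_or_odd n with ⟨m, hm⟩ | ⟨m, hm⟩
  · -- n even: n = 2(e+1), target degree is e+1
    have hneq : n = 2*(e+1) := by omega
    have hcoeff0 : (Sq q (n+1)).coeff (e+2) = 0 := by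
      rw [hcoeffT, hneq]
      push_cast
      ring
    have hdT' : (Sq q (n+1)).natDegree ≤ e+1 := by
      rw [natDegree_le_iff_coeff_eq_zero]
      intro N hN
      rcases eq_or_lt_of_le (Nat.succ_le_of_lt hN) with hNe | hNe
      · rw [← hNe]; exact hcoeff0
      · exact coeff_eq_zero_of_natDegree_lt (by omega)
    obtain ⟨l', s, hl', hsmono, hsneg, hfac⟩ :=
      assemble (Sq q (n+1)) (e+1) R hRmono hRtop hRroot hdT' hT0
    rw [show (n+1)/2 = e+1 by omega]
    exact ⟨l', s, hl', hsmono, hsneg, hfac⟩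
  · -- n odd: n = 2(e+1)+1, target degree is e+2
    have hneq : n = 2*e+3 := by omega
    have hcoeffl : (Sq q (n+1)).coeff (e+2) = l := by
      rw [hcoeffT, hneq]
      push_cast
      ring
    have hdT' : (Sq q (n+1)).natDegree = e+2 := by
      refine le_antisymm hdT (le_natDegree_of_ne_zero ?_)
      rw [hcoeffl]; exact hl0
    have hTlead : (Sq q (n+1)).leadingCoeff = l := by
      have hcn := coeff_natDegree (p := Sq q (n+1))
      rw [hdT', hcoeffl] at hcn
      exact hcn.symm
    -- behaviour at -∞ via composition with -X
    set U : Polynomial ℝ := (Sq q (n+1)).comp (-X) with hU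
    have hXdeg : (-X : Polynomial ℝ).natDegree = 1 := by simp
    have hUdeg : U.natDegree = e+2 := by
      rw [hU, natDegree_comp, hXdeg, hdT', mul_one]
    have hUlc : U.leadingCoeff = l * (-1)^(e+2) := by
      rw [hU, leadingCoeff_comp (by rw [hXdeg]; omega), hTlead, hdT']
      simp
    have hUdegpos : (0 : WithBot ℕ) < U.degree := by
      rw [← natDegree_pos_iff_degree_pos, hUdeg]; omega
    have hUeval : ∀ x : ℝ, U.eval x = (Sq q (n+1)).eval (-x) := by
      intro x
      rw [hU, eval_comp]
      simp
    set i0 : Fin (e+1) := ⟨0, by omega⟩ with hi0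
    -- sign of the value at the smallest root
    have hA : 0 < ∏ j ∈ univ.erase i0, (r j - r i0) := by
      apply Finset.prod_pos
      intro j hj
      have hja : j ≠ i0 := (Finset.mem_erase.mp hj).1
      have : i0 < j := by
        rw [Fin.lt_def]
        have : (j:ℕ) ≠ 0 := fun hh => hja (Fin.ext hh)
        show 0 < (j:ℕ)
        omega
      have := hrmono this
      linarith
    have hw0 : w i0 = (-1)^e * ∏ j ∈ univ.erase i0, (r j - r i0) := by
      show (∏ j ∈ univ.erase i0, (r i0 - r j)) = _
      rw [Finset.prod_congr rfl (fun j _ => show r i0 - r j = (-1) * (r j - r i0) by ring),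
        Finset.prod_mul_distrib, Finset.prod_const, Finset.card_erase_of_mem (mem_univ _),
        card_univ, Fintype.card_fin, Nat.add_sub_cancel]
    -- get a point to the left of all roots with the right sign
    have hB : ∃ B : ℝ, B < r i0 ∧ (Sq q (n+1)).eval B * (Sq q (n+1)).eval (r i0) < 0 := by
      rcases Nat.even_or_odd e with hpar | hpar
      ·
        have hsign : (-1:ℝ)^e = 1 := hpar.neg_one_pow
        have hv0 : (Sq q (n+1)).eval (r i0) < 0 := by
          rw [hv i0, hw0, hsign, one_mul]
          exact mul_neg_of_neg_of_pos (hc i0) (mul_pos hl hA)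
        have hlcpos : 0 ≤ U.leadingCoeff := by
          rw [hUlc, (by exact Even.add hpar (by norm_num) : Even (e+2)).neg_one_pow, mul_one]
          exact hl.le
        have htend := tendsto_atTop_of_leadingCoeff_nonneg U hUdegpos hlcpos
        obtain ⟨x0, hx1, hx2⟩ :=
          ((htend.eventually_ge_atTop 1).and (Filter.eventually_gt_atTop (-(r i0)))).exists
        refine ⟨-x0, by linarith, ?_⟩
        rw [← hUeval]
        have : (0:ℝ) < U.eval x0 := by linarith
        exact mul_neg_of_pos_of_neg this hv0
      · -- e odd
        have hsign : (-1:ℝ)^e = -1 := hpar.neg_one_pow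
        have hv0 : 0 < (Sq q (n+1)).eval (r i0) := by
          rw [hv i0, hw0, hsign]
          have hwneg : l * ((-1) * ∏ j ∈ univ.erase i0, (r j - r i0)) < 0 := by
            have := mul_pos hl hA
            nlinarith
          exact mul_pos_of_neg_of_neg (hc i0) hwneg
        have hlcneg : U.leadingCoeff ≤ 0 := by
          have : Odd (e+2) := by
            rcases hpar with ⟨t, ht⟩
            exact ⟨t+1, by omega⟩
          rw [hUlc, this.neg_one_pow]
          nlinarith
        have htend := tendsto_atBot_of_leadingCoeff_nonpos U hUdegpos hlcneg
        obtain ⟨x0, hx1, hx2⟩ :=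
          ((htend.eventually_le_atBot (-1)).and (Filter.eventually_gt_atTop (-(r i0)))).exists
        refine ⟨-x0, by linarith, ?_⟩
        rw [← hUeval]
        have : U.eval x0 < 0 := by linarith
        exact mul_neg_of_neg_of_pos this hv0
    obtain ⟨B, hBlt, hBsign⟩ := hB
    -- extended interval function
    set R' : ℕ → ℝ := fun k => match k with
      | 0 => B
      | (k'+1) => R k' with hR'
    have hR'mono : ∀ a b : ℕ, a < b → b ≤ e+2 → R' a < R' b := by
      intro a b hab hb
      match a, b with
      | 0, (b'+1) =>
        show B < R b'
        by_cases hbe : b' < e+1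
        · rw [hRlt b' hbe]
          rcases Nat.eq_zero_or_pos b' with h0 | h0
          · subst h0
            exact hBlt
          · exact lt_trans hBlt (hrmono (Fin.mk_lt_mk.mpr h0))
        · have : b' = e+1 := by omega
          rw [this, hRtop]
          exact lt_trans hBlt (hrneg i0)
      | (a'+1), (b'+1) =>
        exact hRmono a' b' (by omega) (by omega)
    have hR'top : R' (e+2) = 0 := hRtop
    have hR'root : ∀ k, k < e+2 → ∃ x ∈ Set.Ioo (R' k) (R' (k+1)), (Sq q (n+1)).eval x = 0 := by
      intro k hk
      match k with
      | 0 =>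
        show ∃ x ∈ Set.Ioo B (R 0), _
        rw [hRlt 0 (by omega)]
        exact zero_of_sign_change hBlt hBsign
      | (k'+1) =>
        exact hRroot k' (by omega)
    obtain ⟨l', s, hl', hsmono, hsneg, hfac⟩ :=
      assemble (Sq q (n+1)) (e+2) R' hR'mono hR'top hR'root hdT hT0
    rw [show (n+1)/2 = e+2 by omega]
    exact ⟨l', s, hl', hsmono, hsneg, hfac⟩


/-- For every real `q > 0` and `n ≥ 2`, `S_n(x,q)` has only real, nonpositive and
simple zeros. -/
theorem stmt15 (q : ℝ) (hq : 0 < q) (n : ℕ) (hn : 2 ≤ n) :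
    (∀ z : ℂ, Polynomial.aeval z (Sq q n) = 0 → ∃ r : ℝ, r ≤ 0 ∧ z = (r : ℂ)) ∧
    (∀ r : ℝ, (Sq q n).rootMultiplicity r ≤ 1) := by
  have good : ∃ (l : ℝ) (r : Fin (n/2) → ℝ), 0 < l ∧ StrictMono r ∧ (∀ i, r i < 0) ∧
      Sq q n = C l * ∏ i, (X - C (r i)) := by
    induction n, hn using Nat.le_induction with
    | base =>
      refine ⟨q, fun _ => -q, hq, ?_, fun _ => by linarith, ?_⟩
      · intro i j hij
        exfalso
        rw [Fin.lt_def] at hij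
        have := i.isLt
        have := j.isLt
        omega
      · have h1 : Sq q 1 = C q := by
          show (C q + C ((0:ℕ):ℝ) * X) * Sq q 0 + X * (1 - 2 * X) * (Sq q 0).derivative = C q
          show (C q + C ((0:ℕ):ℝ) * X) * 1 + X * (1 - 2 * X) * (1 : Polynomial ℝ).derivative = C q
          simp
        show (C q + C ((1:ℕ):ℝ) * X) * Sq q 1 + X * (1 - 2 * X) * (Sq q 1).derivative = _
        rw [h1]
        simp
        ring
    | succ m hm ih => exact step q hq m hm ih
  obtain ⟨l, r, hl, hrmono, hrneg, hfac⟩ := good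
  have hl0 : l ≠ 0 := ne_of_gt hl
  have hmprod : (∏ i, (X - C (r i)) : Polynomial ℝ)
      = (Multiset.map (fun a => X - C a) (Multiset.map r Finset.univ.val)).prod := by
    rw [Multiset.map_map, Finset.prod_eq_multiset_prod]
    rfl
  constructor
  · intro z hz
    rw [hfac] at hz
    simp only [map_mul, map_prod, map_sub, aeval_C, aeval_X] at hz
    have hlz : (algebraMap ℝ ℂ) l ≠ 0 := by
      simp only [Complex.coe_algebraMap, ne_eq, Complex.ofReal_eq_zero]
      exact hl0
    have hprod : ∏ i, (z - (algebraMap ℝ ℂ) (r i)) = 0 := by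
      rcases mul_eq_zero.mp hz with h | h
      · exact absurd h hlz
      · exact h
    obtain ⟨i, -, hi⟩ := Finset.prod_eq_zero_iff.mp hprod
    refine ⟨r i, (hrneg i).le, ?_⟩
    have := sub_eq_zero.mp hi
    simpa [Complex.coe_algebraMap] using this
  · intro a
    rw [← Polynomial.count_roots, hfac, Polynomial.roots_C_mul _ hl0, hmprod,
      Polynomial.roots_multiset_prod_X_sub_C]
    exact Multiset.nodup_iff_count_le_one.mp
      (Multiset.Nodup.map hrmono.injective Finset.univ.nodup) a
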